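/- Under the homogeneous Dawid–Skene model with constant assignment probability q, uniform class prior π_k = 1/L, and worker accuracies w_i ∈ (0,1) with w_i ≠ 1/L for at least one i: (a) the oracle MAP rule argmax_{k} P(y_j = k | Z_{1j},…,Z_{Mj}) coincides with weighted majority voting with weights v_i = ln((L−1)·w_i/(1−w_i)); and (b) setting t = (q/((L−1)·‖v‖₂))·Σ_{i=1}^M v_i·(L·w_i − 1), c = ‖v‖_∞/‖v‖₂ and σ² = q, one always has t ≥ 0, and hence without any further condition E[E_N] ≤ (L−1)·min{ exp(−t²/2), exp(−t²/(2·(σ² + c·t/3))) }. -/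

import Mathlib

open MeasureTheory ProbabilityTheory Real

noncomputable section

namespace CrowdHom

/-- Conditional law of `Z i j ∈ Fin (L+1)` (`0` = missing) given the true label `y j = k`
under the homogeneous Dawid–Skene model with constant assignment probability `q` and
worker accuracies `w`. -/
def condLaw {M L : ℕ} (q : ℝ) (w : Fin M → ℝ) (i : Fin M) (k : Fin L)
    (h : Fin (L + 1)) : ℝ :=
  if hz : h = 0 then 1 - q
  else q * (if h.pred hz = k then w i else (1 - w i) / ((L : ℝ) - 1))

/-- The quantity `t` of weighted majority voting under the homogeneous model. -/
def tWMV {M : ℕ} (L : ℕ) (q : ℝ) (w v : Fin M → ℝ) : ℝ :=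
  q / (((L : ℝ) - 1) * Real.sqrt (∑ i, v i ^ 2)) * ∑ i, v i * ((L : ℝ) * w i - 1)

/-- `c = ‖v‖_∞ / ‖v‖₂`. -/
def cConst {M : ℕ} (v : Fin M → ℝ) : ℝ :=
  (sSup {x : ℝ | ∃ i : Fin M, x = |v i|}) / Real.sqrt (∑ i, v i ^ 2)

end CrowdHom

namespace CrowdAux

/-- (n+2)! ≥ 2·3^n -/
lemma fact_ge (n : ℕ) : 2 * 3 ^ n ≤ (n + 2).factorial := by
  induction n with
  | zero => simp [Nat.factorial]
  | succ n ih =>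
      have h3 : 3 ≤ n + 3 := by omega
      calc 2 * 3 ^ (n+1) = 3 * (2 * 3 ^ n) := by ring
        _ ≤ 3 * (n+2).factorial := by exact Nat.mul_le_mul_left 3 ih
        _ ≤ (n+3) * (n+2).factorial := Nat.mul_le_mul_right _ h3
        _ = (n + 3).factorial := by simp [Nat.factorial_succ]

lemma exp_tsum (x : ℝ) : Real.exp x = ∑' n : ℕ, x ^ n / n.factorial := by
  rw [Real.exp_eq_exp_ℝ, NormedSpace.exp_eq_tsum_div]

/-- Bernstein-type pointwise bound. -/
lemma exp_le_quad {x B : ℝ} (hx : |x| ≤ B) (hB : B < 3) :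
    Real.exp x ≤ 1 + x + x ^ 2 / (2 * (1 - B / 3)) := by
  have hB0 : 0 ≤ B := le_trans (abs_nonneg x) hx
  have hsum : Summable (fun n : ℕ => x ^ n / n.factorial) :=
    Real.summable_pow_div_factorial x
  have hsum2 : Summable (fun n : ℕ => x ^ (n+2) / (n+2).factorial) := by
    exact_mod_cast (summable_nat_add_iff 2).2 hsum
  have hgeo : Summable (fun n : ℕ => x ^ 2 / 2 * (B / 3) ^ n) := by
    apply Summable.mul_left
    exact summable_geometric_of_lt_one (by positivity) (by linarith)
  have hterm : ∀ n : ℕ, x ^ (n+2) / (n+2).factorial ≤ x ^ 2 / 2 * (B / 3) ^ n := by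
    intro n
    have h1 : x ^ (n+2) ≤ x ^ 2 * B ^ n := by
      have : x ^ (n+2) = x ^ 2 * x ^ n := by ring
      rw [this]
      apply mul_le_mul_of_nonneg_left _ (sq_nonneg x)
      calc x ^ n ≤ |x ^ n| := le_abs_self _
        _ = |x| ^ n := (abs_pow x n).symm ▸ rfl
        _ ≤ B ^ n := pow_le_pow_left₀ (abs_nonneg x) hx n
    have h2 : ((n+2).factorial : ℝ) ≥ 2 * 3 ^ n := by exact_mod_cast fact_ge n
    have hfpos : (0:ℝ) < (n+2).factorial := by positivity
    calc x ^ (n+2) / (n+2).factorial ≤ x ^ 2 * B ^ n / (n+2).factorial := by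
          gcongr
      _ ≤ x ^ 2 * B ^ n / (2 * 3 ^ n) := by
          gcongr
      _ = x ^ 2 / 2 * (B / 3) ^ n := by
          rw [div_pow]; field_simp
  have htail : (∑' n : ℕ, x ^ (n+2) / (n+2).factorial) ≤ x ^ 2 / (2 * (1 - B/3)) := by
    calc (∑' n : ℕ, x ^ (n+2) / (n+2).factorial)
        ≤ ∑' n : ℕ, x ^ 2 / 2 * (B / 3) ^ n := Summable.tsum_le_tsum hterm hsum2 hgeo
      _ = x ^ 2 / 2 * (1 - B/3)⁻¹ := by
          rw [tsum_mul_left, tsum_geometric_of_lt_one (by positivity) (by linarith)]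
      _ = x ^ 2 / (2 * (1 - B/3)) := by
          have h13 : (1 - B/3) ≠ 0 := by intro h; rw [sub_eq_zero] at h; linarith
          field_simp
  have hsplit : Real.exp x = 1 + x + ∑' n : ℕ, x ^ (n+2) / (n+2).factorial := by
    rw [exp_tsum]
    rw [Summable.tsum_eq_zero_add hsum]
    have h1 : (∑' n : ℕ, x ^ (n+1) / (n+1).factorial)
        = x + ∑' n : ℕ, x ^ (n+2) / (n+2).factorial := by
      rw [Summable.tsum_eq_zero_add ((summable_nat_add_iff 1).2 hsum)]
      norm_num
    simp only [pow_zero, Nat.factorial_zero] at *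
    rw [h1]; ring
  rw [hsplit]
  linarith [htail]


/-- sinh r ≤ r cosh r for r ≥ 0. -/
lemma sinh_le_mul_cosh {r : ℝ} (hr : 0 ≤ r) : Real.sinh r ≤ r * Real.cosh r := by
  set f : ℝ → ℝ := fun x => x * Real.cosh x - Real.sinh x with hf
  have hd : ∀ x : ℝ, HasDerivAt f (x * Real.sinh x) x := by
    intro x
    have h1 : HasDerivAt (fun x : ℝ => x * Real.cosh x)
        (1 * Real.cosh x + x * Real.sinh x) x :=
      (hasDerivAt_id x).mul (Real.hasDerivAt_cosh x)
    have := h1.sub (Real.hasDerivAt_sinh x)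
    exact this.congr_deriv (by ring)
  have hmono : MonotoneOn f (Set.Ici 0) := by
    apply monotoneOn_of_deriv_nonneg (convex_Ici 0)
    · exact (Differentiable.continuous fun x => (hd x).differentiableAt).continuousOn
    · exact fun x _ => (hd x).differentiableAt.differentiableWithinAt
    · intro x hx
      rw [(hd x).deriv]
      rw [interior_Ici] at hx
      have hsh : 0 ≤ Real.sinh x := by
        rw [Real.sinh_eq]
        have hx0 : (0:ℝ) < x := hx
        have := Real.exp_le_exp.2 (by linarith : -x ≤ x)
        linarith
      exact mul_nonneg (le_of_lt hx) hsh
  have h0 : f 0 = 0 := by simp [hf]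
  have := hmono (Set.self_mem_Ici) hr hr
  rw [h0] at this
  simpa [hf] using this

/-- 2(e^u − 1) ≤ u(e^u + 1) for u ≥ 0. -/
lemma two_exp_sub_one_le {u : ℝ} (hu : 0 ≤ u) :
    2 * (Real.exp u - 1) ≤ u * (Real.exp u + 1) := by
  have h := sinh_le_mul_cosh (by linarith : (0:ℝ) ≤ u / 2)
  rw [Real.sinh_eq, Real.cosh_eq] at h
  have hE : Real.exp (u/2) * Real.exp (u/2) = Real.exp u := by
    rw [← Real.exp_add]; ring_nf
  have hEF : Real.exp (u/2) * Real.exp (-(u/2)) = 1 := by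
    rw [← Real.exp_add]; ring_nf; exact Real.exp_zero
  have hEpos := Real.exp_pos (u/2)
  nlinarith [mul_le_mul_of_nonneg_left h hEpos.le]

/-- Key algebraic step: 2ab(e^{2u} − 1) ≤ u(a e^{2u} + b). -/
lemma key_alg {a b u : ℝ} (ha : 0 ≤ a) (hb : 0 ≤ b) (hab : a + b = 1) (hu : 0 ≤ u) :
    2 * a * b * (Real.exp (2 * u) - 1) ≤ u * (a * Real.exp (2 * u) + b) := by
  set s := Real.exp u with hs
  have hs1 : 1 ≤ s := Real.one_le_exp hu
  have hsq : Real.exp (2 * u) = s * s := by rw [hs, ← Real.exp_add]; ring_nf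
  have h2 := two_exp_sub_one_le hu
  rw [← hs] at h2
  rw [hsq]
  have hab0 : 0 ≤ a * b * (s + 1) := by positivity
  have step1 : 2 * a * b * (s * s - 1) ≤ u * (a * b * (s + 1) ^ 2) := by
    have := mul_le_mul_of_nonneg_left h2 hab0
    nlinarith [this]
  have heq : a * s * s + b - a * b * (s + 1) ^ 2 = (a * s - b) ^ 2 := by
    linear_combination (-(a * s * s + b)) * hab
  have hid : a * b * (s + 1) ^ 2 ≤ a * s * s + b := by
    nlinarith [sq_nonneg (a * s - b), heq]
  have step2 : u * (a * b * (s + 1) ^ 2) ≤ u * (a * s * s + b) :=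
    mul_le_mul_of_nonneg_left hid hu
  calc 2 * a * b * (s * s - 1) ≤ u * (a * b * (s + 1) ^ 2) := step1
    _ ≤ u * (a * s * s + b) := step2
    _ = u * (a * (s * s) + b) := by ring

/-- Two-point Hoeffding, nonneg case. -/
lemma hoeffding_two_nonneg {a b : ℝ} (ha : 0 ≤ a) (hb : 0 ≤ b) (hab : a + b = 1)
    {u : ℝ} (hu : 0 ≤ u) :
    a * Real.exp (2 * b * u) + b * Real.exp (-(2 * a * u)) ≤ Real.exp (u ^ 2 / 2) := by
  set D : ℝ → ℝ := fun x => a * Real.exp (2 * b * x) + b * Real.exp (-(2 * a * x)) with hDdef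
  have hD : ∀ x, 0 < D x := by
    intro x
    rcases eq_or_lt_of_le ha with h | h
    · have hb1 : b = 1 := by linarith
      simp [hDdef, ← h, hb1]
    · have : 0 < a * Real.exp (2 * b * x) := mul_pos h (Real.exp_pos _)
      have : 0 ≤ b * Real.exp (-(2 * a * x)) := mul_nonneg hb (Real.exp_pos _).le
      positivity
  set F : ℝ → ℝ := fun x => x ^ 2 / 2 - Real.log (D x) with hFdef
  have hD' : ∀ x, HasDerivAt D
      (2 * a * b * Real.exp (2 * b * x) - 2 * a * b * Real.exp (-(2 * a * x))) x := by
    intro x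
    have h1 : HasDerivAt (fun x : ℝ => 2 * b * x) (2 * b) x := by
      simpa using (hasDerivAt_id x).const_mul (2 * b)
    have h2 : HasDerivAt (fun x : ℝ => -(2 * a * x)) (-(2 * a)) x := by
      exact ((hasDerivAt_id x).const_mul (2 * a)).neg.congr_deriv (by ring)
    have := ((h1.exp.const_mul a).add (h2.exp.const_mul b))
    exact this.congr_deriv (by ring)
  have hF : ∀ x, HasDerivAt F
      (x - (2 * a * b * Real.exp (2 * b * x) - 2 * a * b * Real.exp (-(2 * a * x))) / D x) x := by
    intro x
    have h1 : HasDerivAt (fun x : ℝ => x ^ 2 / 2) x x := by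
      simpa using (hasDerivAt_pow 2 x).div_const 2
    exact h1.sub (((hD' x).log (hD x).ne'))
  have hderiv_nonneg : ∀ x ∈ Set.Ici (0:ℝ), 0 ≤ x -
      (2 * a * b * Real.exp (2 * b * x) - 2 * a * b * Real.exp (-(2 * a * x))) / D x := by
    intro x hx
    have hx0 : (0:ℝ) ≤ x := hx
    rw [sub_nonneg, div_le_iff₀ (hD x)]
    have hkey := key_alg ha hb hab hx0
    have he1 : Real.exp (2 * b * x) = Real.exp (2 * x) * Real.exp (-(2 * a * x)) := by
      rw [← Real.exp_add]; congr 1; linear_combination (2*x) * hab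
    have hepos := Real.exp_pos (-(2 * a * x))
    have := mul_le_mul_of_nonneg_right hkey hepos.le
    rw [hDdef]
    simp only []
    rw [he1]
    nlinarith [this]
  have hmono : MonotoneOn F (Set.Ici 0) := by
    apply monotoneOn_of_deriv_nonneg (convex_Ici 0)
    · exact (Differentiable.continuous fun x => (hF x).differentiableAt).continuousOn
    · exact fun x _ => (hF x).differentiableAt.differentiableWithinAt
    · intro x hx
      rw [(hF x).deriv]
      rw [interior_Ici] at hx
      exact hderiv_nonneg x (Set.mem_Ici.mpr (le_of_lt hx))
  have hF0 : F 0 = 0 := by simp [hFdef, hDdef, hab]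
  have hFu : 0 ≤ F u := by
    have := hmono Set.self_mem_Ici (hu : u ∈ Set.Ici 0) hu
    rw [hF0] at this; exact this
  have hlog : Real.log (D u) ≤ u ^ 2 / 2 := by
    rw [hFdef] at hFu; simp only [] at hFu; linarith
  calc D u ≤ Real.exp (Real.log (D u)) := by rw [Real.exp_log (hD u)]
    _ ≤ Real.exp (u ^ 2 / 2) := Real.exp_le_exp.2 hlog

/-- Two-point Hoeffding lemma (±1-valued). -/
lemma hoeffding_two {a b : ℝ} (ha : 0 ≤ a) (hb : 0 ≤ b) (hab : a + b = 1) (u : ℝ) :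
    a * Real.exp (2 * b * u) + b * Real.exp (-(2 * a * u)) ≤ Real.exp (u ^ 2 / 2) := by
  rcases le_or_gt 0 u with hu | hu
  · exact hoeffding_two_nonneg ha hb hab hu
  · have h := hoeffding_two_nonneg hb ha (by linarith) (by linarith : 0 ≤ -u)
    have e1 : 2 * a * -u = -(2 * a * u) := by ring
    have e2 : -(2 * b * -u) = 2 * b * u := by ring
    rw [e1, e2] at h
    have e3 : (-u) ^ 2 / 2 = u ^ 2 / 2 := by ring_nf
    rw [e3] at h
    linarith

/-- Three-point Hoeffding bound. -/
lemma hoeffding_three {p0 p1 p2 : ℝ} (hp0 : 0 ≤ p0) (hp1 : 0 ≤ p1) (hp2 : 0 ≤ p2)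
    (hsum : p0 + p1 + p2 = 1) (t : ℝ) :
    p0 + p1 * Real.exp t + p2 * Real.exp (-t) ≤ Real.exp ((p1 - p2) * t + t ^ 2 / 2) := by
  set a := p1 + p0 / 2 with hadef
  set b := p2 + p0 / 2 with hbdef
  have ha : 0 ≤ a := by positivity
  have hb : 0 ≤ b := by positivity
  have hab : a + b = 1 := by rw [hadef, hbdef]; linarith
  have hcosh : 2 ≤ Real.exp t + Real.exp (-t) := by
    have h := two_mul_le_add_sq (Real.exp (t/2)) (Real.exp (-(t/2)))
    have h1 : Real.exp (t/2) * Real.exp (-(t/2)) = 1 := by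
      rw [← Real.exp_add]; ring_nf; exact Real.exp_zero
    have h2 : Real.exp (t/2) ^ 2 = Real.exp t := by
      rw [sq, ← Real.exp_add]; ring_nf
    have h3 : Real.exp (-(t/2)) ^ 2 = Real.exp (-t) := by
      rw [sq, ← Real.exp_add]; ring_nf
    rw [h2, h3] at h
    nlinarith [h, h1]
  have step1 : p0 + p1 * Real.exp t + p2 * Real.exp (-t)
      ≤ a * Real.exp t + b * Real.exp (-t) := by
    rw [hadef, hbdef]
    nlinarith [hcosh, hp0]
  have hsplit1 : Real.exp t = Real.exp ((a - b) * t) * Real.exp (2 * b * t) := by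
    rw [← Real.exp_add]; congr 1; linear_combination (-t) * hab
  have hsplit2 : Real.exp (-t) = Real.exp ((a - b) * t) * Real.exp (-(2 * a * t)) := by
    rw [← Real.exp_add]; congr 1; linear_combination t * hab
  have step2 : a * Real.exp t + b * Real.exp (-t)
      ≤ Real.exp ((a - b) * t) * Real.exp (t ^ 2 / 2) := by
    rw [hsplit1, hsplit2]
    have h := hoeffding_two ha hb hab t
    calc a * (Real.exp ((a-b)*t) * Real.exp (2*b*t)) + b * (Real.exp ((a-b)*t) * Real.exp (-(2*a*t)))
        = Real.exp ((a-b)*t) * (a * Real.exp (2*b*t) + b * Real.exp (-(2*a*t))) := by ring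
      _ ≤ Real.exp ((a-b)*t) * Real.exp (t^2/2) :=
          mul_le_mul_of_nonneg_left h (Real.exp_pos _).le
  have hab2 : a - b = p1 - p2 := by rw [hadef, hbdef]; ring
  calc p0 + p1 * Real.exp t + p2 * Real.exp (-t)
      ≤ Real.exp ((a - b) * t) * Real.exp (t ^ 2 / 2) := le_trans step1 step2
    _ = Real.exp ((p1 - p2) * t + t ^ 2 / 2) := by rw [← Real.exp_add, hab2]


section Model

variable {M L : ℕ}

/-- the log-odds weight -/
noncomputable def vv (L : ℕ) (w : Fin M → ℝ) (i : Fin M) : ℝ :=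
  Real.log (((L : ℝ) - 1) * w i / (1 - w i))

lemma L_facts (hL : 2 ≤ L) : (2:ℝ) ≤ (L:ℝ) ∧ (1:ℝ) ≤ (L:ℝ) - 1 := by
  have : (2:ℝ) ≤ (L:ℝ) := by exact_mod_cast hL
  constructor <;> linarith

lemma ratio_pos (hL : 2 ≤ L) {w : Fin M → ℝ} (hw0 : ∀ i, 0 < w i) (hw1 : ∀ i, w i < 1)
    (i : Fin M) : 0 < ((L : ℝ) - 1) * w i / (1 - w i) := by
  have h1 := (L_facts hL).2
  have := hw0 i; have := hw1 i
  apply div_pos (by nlinarith) (by linarith)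

lemma vv_mul_nonneg (hL : 2 ≤ L) {w : Fin M → ℝ} (hw0 : ∀ i, 0 < w i) (hw1 : ∀ i, w i < 1)
    (i : Fin M) : 0 ≤ vv L w i * ((L : ℝ) * w i - 1) := by
  have h1 := (L_facts hL).2
  have hwi0 := hw0 i; have hwi1 := hw1 i
  rcases le_total ((L:ℝ) * w i) 1 with h | h
  · have hr : ((L : ℝ) - 1) * w i / (1 - w i) ≤ 1 := by
      rw [div_le_one (by linarith)]; nlinarith
    have : vv L w i ≤ 0 := Real.log_nonpos (le_of_lt (ratio_pos hL hw0 hw1 i)) hr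
    nlinarith
  · have hr : 1 ≤ ((L : ℝ) - 1) * w i / (1 - w i) := by
      rw [le_div_iff₀ (by linarith)]; nlinarith
    have : 0 ≤ vv L w i := Real.log_nonneg hr
    nlinarith

lemma vv_ne_zero (hL : 2 ≤ L) {w : Fin M → ℝ} (hw0 : ∀ i, 0 < w i) (hw1 : ∀ i, w i < 1)
    {i : Fin M} (hne : w i ≠ 1 / (L : ℝ)) : vv L w i ≠ 0 := by
  have h1 := (L_facts hL).2
  have hL0 : (0:ℝ) < L := by linarith
  have hwi0 := hw0 i; have hwi1 := hw1 i
  have hr1 : ((L : ℝ) - 1) * w i / (1 - w i) ≠ 1 := by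
    intro h
    rw [div_eq_one_iff_eq (by linarith)] at h
    apply hne
    field_simp
    nlinarith
  exact Real.log_ne_zero_of_pos_of_ne_one (ratio_pos hL hw0 hw1 i) hr1

lemma exp_vv (hL : 2 ≤ L) {w : Fin M → ℝ} (hw0 : ∀ i, 0 < w i) (hw1 : ∀ i, w i < 1)
    (i : Fin M) : Real.exp (vv L w i) = ((L : ℝ) - 1) * w i / (1 - w i) :=
  Real.exp_log (ratio_pos hL hw0 hw1 i)

lemma condLaw_nonneg (hL : 2 ≤ L) {q : ℝ} (hq0 : 0 < q) (hq1 : q ≤ 1)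
    {w : Fin M → ℝ} (hw0 : ∀ i, 0 < w i) (hw1 : ∀ i, w i < 1)
    (i : Fin M) (k : Fin L) (z : Fin (L + 1)) : 0 ≤ CrowdHom.condLaw q w i k z := by
  have h1 := (L_facts hL).2
  have hwi0 := hw0 i; have hwi1 := hw1 i
  unfold CrowdHom.condLaw
  split
  · linarith
  · split
    · exact mul_nonneg hq0.le hwi0.le
    · exact mul_nonneg hq0.le (div_nonneg (by linarith) (by linarith))

lemma condLaw_succ_self {q : ℝ} {w : Fin M → ℝ} (i : Fin M) (k : Fin L) :
    CrowdHom.condLaw q w i k k.succ = q * w i := by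
  unfold CrowdHom.condLaw
  rw [dif_neg (Fin.succ_ne_zero k)]
  simp [Fin.pred_succ]

lemma condLaw_succ_other {q : ℝ} {w : Fin M → ℝ} (i : Fin M) {k l : Fin L} (h : l ≠ k) :
    CrowdHom.condLaw q w i k l.succ = q * ((1 - w i) / ((L : ℝ) - 1)) := by
  unfold CrowdHom.condLaw
  rw [dif_neg (Fin.succ_ne_zero l)]
  simp [Fin.pred_succ, h]

lemma condLaw_sum (hL : 2 ≤ L) {q : ℝ} {w : Fin M → ℝ} (hw1 : ∀ i, w i < 1)
    (i : Fin M) (k : Fin L) :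
    ∑ z : Fin (L + 1), CrowdHom.condLaw q w i k z = 1 := by
  rw [Fin.sum_univ_succ]
  have h0 : CrowdHom.condLaw q w i k 0 = 1 - q := by unfold CrowdHom.condLaw; simp
  have hsucc : ∀ p : Fin L, CrowdHom.condLaw q w i k p.succ
      = q * (if p = k then w i else (1 - w i) / ((L : ℝ) - 1)) := by
    intro p
    unfold CrowdHom.condLaw
    rw [dif_neg (Fin.succ_ne_zero p)]
    simp [Fin.pred_succ]
  rw [h0]
  have : ∑ p : Fin L, CrowdHom.condLaw q w i k p.succ
      = ∑ p : Fin L, q * (if p = k then w i else (1 - w i) / ((L : ℝ) - 1)) := by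
    exact Finset.sum_congr rfl (fun p _ => hsucc p)
  rw [this]
  have hLpos : (0:ℝ) < L := by
    have := (L_facts hL).1; linarith
  have hL1 : ((L:ℝ) - 1) ≠ 0 := by
    have := (L_facts hL).2; linarith
  have hsum2 : ∑ p : Fin L, q * (if p = k then w i else (1 - w i) / ((L : ℝ) - 1))
      = (q * w i - q * ((1 - w i) / ((L:ℝ) - 1))) + (L : ℝ) * (q * ((1 - w i) / ((L:ℝ) - 1))) := by
    have : ∀ p : Fin L, q * (if p = k then w i else (1 - w i) / ((L : ℝ) - 1))
        = (if p = k then q * w i - q * ((1 - w i) / ((L:ℝ) - 1)) else 0)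
          + q * ((1 - w i) / ((L:ℝ) - 1)) := by
      intro p; split_ifs <;> ring
    rw [Finset.sum_congr rfl (fun p _ => this p), Finset.sum_add_distrib,
      Finset.sum_ite_eq' Finset.univ k]
    simp [Finset.card_univ]
  rw [hsum2]
  field_simp
  ring


/-- ±1/0 payoff -/
def Xv (k l : Fin L) (z : Fin (L + 1)) : ℝ :=
  (if z = l.succ then 1 else 0) - (if z = k.succ then 1 else 0)

lemma mgf_sum (hL : 2 ≤ L) {q : ℝ} {w : Fin M → ℝ} (hw1 : ∀ i, w i < 1)
    (i : Fin M) {k l : Fin L} (hkl : l ≠ k) (c : ℝ) :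
    ∑ z : Fin (L + 1), CrowdHom.condLaw q w i k z * Real.exp (c * Xv k l z)
      = 1 + q * w i * (Real.exp (-c) - 1)
        + q * ((1 - w i) / ((L : ℝ) - 1)) * (Real.exp c - 1) := by
  have hne : l.succ ≠ k.succ := fun h => hkl (Fin.succ_inj.mp h)
  have hsplit : ∀ z : Fin (L+1), CrowdHom.condLaw q w i k z * Real.exp (c * Xv k l z)
      = CrowdHom.condLaw q w i k z
        + CrowdHom.condLaw q w i k z * (Real.exp (c * Xv k l z) - 1) := by
    intro z; ring
  rw [Finset.sum_congr rfl (fun z _ => hsplit z), Finset.sum_add_distrib,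
    condLaw_sum hL hw1 i k]
  have hzero : ∀ z ∈ (Finset.univ : Finset (Fin (L+1))),
      z ∉ ({l.succ, k.succ} : Finset (Fin (L+1))) →
      CrowdHom.condLaw q w i k z * (Real.exp (c * Xv k l z) - 1) = 0 := by
    intro z _ hz
    simp only [Finset.mem_insert, Finset.mem_singleton, not_or] at hz
    have hX : Xv k l z = 0 := by
      unfold Xv; rw [if_neg hz.1, if_neg hz.2]; ring
    rw [hX]
    simp
  rw [← Finset.sum_subset (Finset.subset_univ ({l.succ, k.succ} : Finset (Fin (L+1)))) hzero]
  rw [Finset.sum_pair hne]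
  have hXl : Xv k l l.succ = 1 := by unfold Xv; rw [if_pos rfl, if_neg hne]; ring
  have hXk : Xv k l k.succ = -1 := by
    unfold Xv; rw [if_neg (fun h => hne h.symm), if_pos rfl]; ring
  rw [hXl, hXk, condLaw_succ_self, condLaw_succ_other i hkl]
  ring_nf

lemma mgf_le_hoeff (hL : 2 ≤ L) {q : ℝ} (hq0 : 0 < q) (hq1 : q ≤ 1)
    {w : Fin M → ℝ} (hw0 : ∀ i, 0 < w i) (hw1 : ∀ i, w i < 1) (i : Fin M) (c : ℝ) :
    1 + q * w i * (Real.exp (-c) - 1) + q * ((1 - w i) / ((L : ℝ) - 1)) * (Real.exp c - 1)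
      ≤ Real.exp ((q * ((1 - w i) / ((L : ℝ) - 1)) - q * w i) * c + c ^ 2 / 2) := by
  have hLf := (L_facts hL).2
  have hwi0 := hw0 i; have hwi1 := hw1 i
  set p1 := q * ((1 - w i) / ((L : ℝ) - 1)) with hp1def
  set p2 := q * w i with hp2def
  have hp1 : 0 ≤ p1 := mul_nonneg hq0.le (div_nonneg (by linarith) (by linarith))
  have hp2 : 0 ≤ p2 := mul_nonneg hq0.le hwi0.le
  have hple : p1 + p2 ≤ q := by
    have h1 : (1 - w i) / ((L : ℝ) - 1) ≤ 1 - w i := by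
      rw [div_le_iff₀ (by linarith)]
      nlinarith
    have := mul_le_mul_of_nonneg_left h1 hq0.le
    rw [hp1def, hp2def]
    nlinarith
  have hp0 : 0 ≤ 1 - p1 - p2 := by linarith
  have h := hoeffding_three hp0 hp1 hp2 (by ring) c
  calc 1 + p2 * (Real.exp (-c) - 1) + p1 * (Real.exp c - 1)
      = (1 - p1 - p2) + p1 * Real.exp c + p2 * Real.exp (-c) := by ring
    _ ≤ Real.exp ((p1 - p2) * c + c ^ 2 / 2) := h

lemma mgf_le_bern {p1 p2 q' : ℝ} (hp1 : 0 ≤ p1) (hp2 : 0 ≤ p2) (hple : p1 + p2 ≤ q')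
    {c B : ℝ} (hc : |c| ≤ B) (hB : B < 3) :
    1 + p2 * (Real.exp (-c) - 1) + p1 * (Real.exp c - 1)
      ≤ Real.exp ((p1 - p2) * c + q' * c ^ 2 / (2 * (1 - B / 3))) := by
  have hB0 : 0 ≤ B := le_trans (abs_nonneg c) hc
  have hB3 : 0 < 1 - B / 3 := by linarith
  set K := c ^ 2 / (2 * (1 - B / 3)) with hKdef
  have hK : 0 ≤ K := by positivity
  have e1 : Real.exp c ≤ 1 + c + K := exp_le_quad hc hB
  have e2 : Real.exp (-c) ≤ 1 - c + K := by
    have habs : |(-c)| ≤ B := by rw [abs_neg]; exact hc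
    have := exp_le_quad habs hB
    have hsq : (-c) ^ 2 = c ^ 2 := by ring
    rw [hsq] at this
    linarith
  have h1 : p1 * (Real.exp c - 1) ≤ p1 * (c + K) :=
    mul_le_mul_of_nonneg_left (by linarith) hp1
  have h2 : p2 * (Real.exp (-c) - 1) ≤ p2 * (-c + K) :=
    mul_le_mul_of_nonneg_left (by linarith) hp2
  have h3 : (p1 + p2) * K ≤ q' * K := mul_le_mul_of_nonneg_right hple hK
  have h4 : ((p1 - p2) * c + q' * K) + 1 ≤ Real.exp ((p1 - p2) * c + q' * K) :=
    Real.add_one_le_exp _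
  have hKq : q' * c ^ 2 / (2 * (1 - B / 3)) = q' * K := by
    rw [hKdef]; ring
  rw [hKq]
  nlinarith [h1, h2, h3, h4]


def SSv (v : Fin M → ℝ) (k : Fin L) (h : Fin M → Fin (L + 1)) : ℝ :=
  ∑ i, v i * (if h i = k.succ then (1:ℝ) else 0)

lemma chernoff_prod (hL : 2 ≤ L) {q : ℝ} (hq0 : 0 < q) (hq1 : q ≤ 1)
    {w : Fin M → ℝ} (hw0 : ∀ i, 0 < w i) (hw1 : ∀ i, w i < 1)
    {k l : Fin L} {lam : ℝ} (hlam : 0 ≤ lam) (v : Fin M → ℝ) :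
    ∑ h ∈ Finset.univ.filter (fun h : Fin M → Fin (L+1) => SSv v k h ≤ SSv v l h),
        ∏ i, CrowdHom.condLaw q w i k (h i)
      ≤ ∏ i, ∑ z : Fin (L+1), CrowdHom.condLaw q w i k z * Real.exp (lam * v i * Xv k l z) := by
  have hP : ∀ h : Fin M → Fin (L+1), 0 ≤ ∏ i, CrowdHom.condLaw q w i k (h i) :=
    fun h => Finset.prod_nonneg fun i _ => condLaw_nonneg hL hq0 hq1 hw0 hw1 i k (h i)
  have hprod : ∀ h : Fin M → Fin (L+1),
      (∏ i, CrowdHom.condLaw q w i k (h i)) * Real.exp (lam * (SSv v l h - SSv v k h))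
        = ∏ i, (CrowdHom.condLaw q w i k (h i) * Real.exp (lam * v i * Xv k l (h i))) := by
    intro h
    rw [Finset.prod_mul_distrib]
    congr 1
    rw [← Real.exp_sum]
    congr 1
    unfold SSv Xv
    rw [← Finset.sum_sub_distrib, Finset.mul_sum]
    exact Finset.sum_congr rfl fun i _ => by ring
  have hRHS : (∏ i, ∑ z : Fin (L+1), CrowdHom.condLaw q w i k z
        * Real.exp (lam * v i * Xv k l z))
      = ∑ h : Fin M → Fin (L+1),
          ∏ i, (CrowdHom.condLaw q w i k (h i) * Real.exp (lam * v i * Xv k l (h i))) := by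
    rw [Finset.prod_univ_sum, Fintype.piFinset_univ]
  calc ∑ h ∈ Finset.univ.filter (fun h : Fin M → Fin (L+1) => SSv v k h ≤ SSv v l h),
        ∏ i, CrowdHom.condLaw q w i k (h i)
      ≤ ∑ h ∈ Finset.univ.filter (fun h : Fin M → Fin (L+1) => SSv v k h ≤ SSv v l h),
          (∏ i, CrowdHom.condLaw q w i k (h i))
            * Real.exp (lam * (SSv v l h - SSv v k h)) := by
        apply Finset.sum_le_sum
        intro h hh
        have hmem := (Finset.mem_filter.mp hh).2
        have h1 : (1:ℝ) ≤ Real.exp (lam * (SSv v l h - SSv v k h)) :=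
          Real.one_le_exp (mul_nonneg hlam (by linarith))
        exact le_mul_of_one_le_right (hP h) h1
    _ ≤ ∑ h : Fin M → Fin (L+1),
          (∏ i, CrowdHom.condLaw q w i k (h i))
            * Real.exp (lam * (SSv v l h - SSv v k h)) := by
        apply Finset.sum_le_sum_of_subset_of_nonneg (Finset.filter_subset _ _)
        intro h _ _
        exact mul_nonneg (hP h) (Real.exp_pos _).le
    _ = ∑ h : Fin M → Fin (L+1),
          ∏ i, (CrowdHom.condLaw q w i k (h i) * Real.exp (lam * v i * Xv k l (h i))) :=
        Finset.sum_congr rfl fun h _ => hprod h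
    _ = _ := hRHS.symm

lemma p_le (hL : 2 ≤ L) {q : ℝ} (hq0 : 0 < q) (hq1 : q ≤ 1)
    {w : Fin M → ℝ} (hw0 : ∀ i, 0 < w i) (hw1 : ∀ i, w i < 1) (i : Fin M) :
    q * ((1 - w i) / ((L : ℝ) - 1)) + q * w i ≤ q := by
  have hLf := (L_facts hL).2
  have hwi0 := hw0 i; have hwi1 := hw1 i
  have h1 : (1 - w i) / ((L : ℝ) - 1) ≤ 1 - w i := by
    rw [div_le_iff₀ (by linarith)]
    nlinarith
  nlinarith [mul_le_mul_of_nonneg_left h1 hq0.le]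

lemma chernoff_pair (hM : 0 < M) (hL : 2 ≤ L) {q : ℝ} (hq0 : 0 < q) (hq1 : q ≤ 1)
    {w : Fin M → ℝ} (hw0 : ∀ i, 0 < w i) (hw1 : ∀ i, w i < 1)
    (hwne : ∃ i, w i ≠ 1 / (L : ℝ)) {k l : Fin L} (hkl : l ≠ k) :
    ∑ h ∈ Finset.univ.filter
        (fun h : Fin M → Fin (L+1) => SSv (vv L w) k h ≤ SSv (vv L w) l h),
        ∏ i, CrowdHom.condLaw q w i k (h i)
      ≤ min (Real.exp (-(CrowdHom.tWMV L q w (vv L w)) ^ 2 / 2))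
          (Real.exp (-(CrowdHom.tWMV L q w (vv L w)) ^ 2
            / (2 * (q + CrowdHom.cConst (vv L w) * CrowdHom.tWMV L q w (vv L w) / 3)))) := by
  have hLf := (L_facts hL).2
  have hL1 : ((L:ℝ) - 1) ≠ 0 := by linarith
  set v := vv L w with hvdef
  set S2 := ∑ i, v i ^ 2 with hS2def
  have hS2 : 0 < S2 := by
    obtain ⟨i0, hi0⟩ := hwne
    have hv0 : v i0 ≠ 0 := vv_ne_zero hL hw0 hw1 hi0
    exact Finset.sum_pos' (fun i _ => sq_nonneg _)
      ⟨i0, Finset.mem_univ _, by positivity⟩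
  set R := Real.sqrt S2 with hRdef
  have hR : 0 < R := Real.sqrt_pos.2 hS2
  have hR2 : R ^ 2 = S2 := Real.sq_sqrt hS2.le
  set s := (q / ((L:ℝ) - 1)) * ∑ i, v i * ((L:ℝ) * w i - 1) with hsdef
  have hs : 0 ≤ s := by
    apply mul_nonneg (div_nonneg hq0.le (by linarith))
    exact Finset.sum_nonneg fun i _ => vv_mul_nonneg hL hw0 hw1 i
  set t := CrowdHom.tWMV L q w v with htdef
  have ht : t = s / R := by
    rw [htdef, CrowdHom.tWMV, hsdef]
    field_simp
    rw [← hS2def, ← hRdef, mul_div_assoc, div_self hR.ne', mul_one]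
  -- the sup-norm
  set b := sSup {x : ℝ | ∃ i : Fin M, x = |v i|} with hbdef
  have hbdd : BddAbove {x : ℝ | ∃ i : Fin M, x = |v i|} := by
    have : {x : ℝ | ∃ i : Fin M, x = |v i|} = Set.range (fun i => |v i|) := by
      ext x; simp [eq_comm]
    rw [this]
    exact (Set.finite_range _).bddAbove
  have hble : ∀ i, |v i| ≤ b := fun i => le_csSup hbdd ⟨i, rfl⟩
  have hb0 : 0 ≤ b := le_trans (abs_nonneg (v ⟨0, hM⟩)) (hble ⟨0, hM⟩)
  have hcC : CrowdHom.cConst v = b / R := rfl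
  -- per-worker mean identity
  have hmean : ∀ (lam : ℝ),
      ∑ i, ((q * ((1 - w i) / ((L : ℝ) - 1)) - q * w i) * (lam * v i))
        = -lam * s := by
    intro lam
    rw [hsdef, Finset.mul_sum, Finset.mul_sum]
    apply Finset.sum_congr rfl
    intro i _
    field_simp
    ring
  -- Hoeffding branch
  have hbranchH : ∑ h ∈ Finset.univ.filter
        (fun h : Fin M → Fin (L+1) => SSv v k h ≤ SSv v l h),
        ∏ i, CrowdHom.condLaw q w i k (h i) ≤ Real.exp (-t ^ 2 / 2) := by
    set lam := s / S2 with hlamdef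
    have hlam : 0 ≤ lam := div_nonneg hs hS2.le
    calc ∑ h ∈ Finset.univ.filter
          (fun h : Fin M → Fin (L+1) => SSv v k h ≤ SSv v l h),
          ∏ i, CrowdHom.condLaw q w i k (h i)
        ≤ ∏ i, ∑ z : Fin (L+1), CrowdHom.condLaw q w i k z
            * Real.exp (lam * v i * Xv k l z) :=
          chernoff_prod hL hq0 hq1 hw0 hw1 hlam v
      _ ≤ ∏ i, Real.exp ((q * ((1 - w i) / ((L : ℝ) - 1)) - q * w i) * (lam * v i)
            + (lam * v i) ^ 2 / 2) := by
          apply Finset.prod_le_prod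
          · intro i _
            exact Finset.sum_nonneg fun z _ =>
              mul_nonneg (condLaw_nonneg hL hq0 hq1 hw0 hw1 i k z) (Real.exp_pos _).le
          · intro i _
            rw [mgf_sum hL hw1 i hkl (lam * v i)]
            exact mgf_le_hoeff hL hq0 hq1 hw0 hw1 i (lam * v i)
      _ = Real.exp (∑ i, ((q * ((1 - w i) / ((L : ℝ) - 1)) - q * w i) * (lam * v i)
            + (lam * v i) ^ 2 / 2)) := (Real.exp_sum _ _).symm
      _ = Real.exp (-t ^ 2 / 2) := by
          congr 1
          rw [Finset.sum_add_distrib, hmean lam]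
          have h2 : ∑ i, (lam * v i) ^ 2 / 2 = lam ^ 2 * S2 / 2 := by
            have hterm : ∀ i ∈ Finset.univ, (lam * v i) ^ 2 / 2
                = (lam ^ 2 / 2) * v i ^ 2 := fun i _ => by ring
            rw [Finset.sum_congr rfl hterm, ← Finset.mul_sum, ← hS2def]
            ring
          rw [h2, hlamdef, ht, ← hR2]
          have hRne : R ≠ 0 := hR.ne'
          field_simp
          ring
  -- Bernstein branch
  have hbranchB : ∑ h ∈ Finset.univ.filter
        (fun h : Fin M → Fin (L+1) => SSv v k h ≤ SSv v l h),
        ∏ i, CrowdHom.condLaw q w i k (h i)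
      ≤ Real.exp (-t ^ 2 / (2 * (q + (b / R) * t / 3))) := by
    have hden : 0 < q * S2 + b * s / 3 :=
      add_pos_of_pos_of_nonneg (mul_pos hq0 hS2)
        (div_nonneg (mul_nonneg hb0 hs) (by norm_num))
    set lam := s / (q * S2 + b * s / 3) with hlamdef
    have hlam : 0 ≤ lam := div_nonneg hs hden.le
    have hB3 : lam * b < 3 := by
      rw [hlamdef, div_mul_eq_mul_div, div_lt_iff₀ hden]
      nlinarith [mul_pos hq0 hS2]
    have hcB : ∀ i, |lam * v i| ≤ lam * b := by
      intro i
      rw [abs_mul, abs_of_nonneg hlam]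
      exact mul_le_mul_of_nonneg_left (hble i) hlam
    calc ∑ h ∈ Finset.univ.filter
          (fun h : Fin M → Fin (L+1) => SSv v k h ≤ SSv v l h),
          ∏ i, CrowdHom.condLaw q w i k (h i)
        ≤ ∏ i, ∑ z : Fin (L+1), CrowdHom.condLaw q w i k z
            * Real.exp (lam * v i * Xv k l z) :=
          chernoff_prod hL hq0 hq1 hw0 hw1 hlam v
      _ ≤ ∏ i, Real.exp ((q * ((1 - w i) / ((L : ℝ) - 1)) - q * w i) * (lam * v i)
            + q * (lam * v i) ^ 2 / (2 * (1 - lam * b / 3))) := by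
          apply Finset.prod_le_prod
          · intro i _
            exact Finset.sum_nonneg fun z _ =>
              mul_nonneg (condLaw_nonneg hL hq0 hq1 hw0 hw1 i k z) (Real.exp_pos _).le
          · intro i _
            rw [mgf_sum hL hw1 i hkl (lam * v i)]
            have hwi0 := hw0 i; have hwi1 := hw1 i
            exact mgf_le_bern
              (mul_nonneg hq0.le (div_nonneg (by linarith) (by linarith)))
              (mul_nonneg hq0.le hwi0.le)
              (p_le hL hq0 hq1 hw0 hw1 i) (hcB i) hB3
      _ = Real.exp (∑ i, ((q * ((1 - w i) / ((L : ℝ) - 1)) - q * w i) * (lam * v i)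
            + q * (lam * v i) ^ 2 / (2 * (1 - lam * b / 3)))) := (Real.exp_sum _ _).symm
      _ = Real.exp (-t ^ 2 / (2 * (q + (b / R) * t / 3))) := by
          congr 1
          rw [Finset.sum_add_distrib, hmean lam]
          have h2 : ∑ i, q * (lam * v i) ^ 2 / (2 * (1 - lam * b / 3))
              = (q * lam ^ 2 / (2 * (1 - lam * b / 3))) * S2 := by
            have hterm : ∀ i ∈ Finset.univ, q * (lam * v i) ^ 2 / (2 * (1 - lam * b / 3))
                = (q * lam ^ 2 / (2 * (1 - lam * b / 3))) * v i ^ 2 := fun i _ => by ring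
            rw [Finset.sum_congr rfl hterm, ← Finset.mul_sum, ← hS2def]
          rw [h2]
          have heq1 : 1 - lam * b / 3 = (q * S2) / (q * S2 + b * s / 3) := by
            rw [hlamdef]
            field_simp
            ring
          rw [heq1, hlamdef, ht, ← hR2]
          have hRne : R ≠ 0 := hR.ne'
          have hdenne : q * R ^ 2 + b * s / 3 ≠ 0 := by rw [hR2]; exact hden.ne'
          have hqS2ne : q * R ^ 2 ≠ 0 := by rw [hR2]; exact (mul_pos hq0 hS2).ne'
          field_simp
          ring
  rw [hcC]
  exact le_min hbranchH hbranchB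


lemma prod_condLaw_eq (hL : 2 ≤ L) {q : ℝ} {w : Fin M → ℝ}
    (hw0 : ∀ i, 0 < w i) (hw1 : ∀ i, w i < 1) (k : Fin L) (h : Fin M → Fin (L + 1)) :
    ∏ i, CrowdHom.condLaw q w i k (h i)
      = (∏ i, (if h i = 0 then 1 - q else q * ((1 - w i) / ((L : ℝ) - 1))))
        * Real.exp (SSv (vv L w) k h) := by
  have hLf := (L_facts hL).2
  rw [SSv, Real.exp_sum, ← Finset.prod_mul_distrib]
  apply Finset.prod_congr rfl
  intro i _
  have hwi0 := hw0 i; have hwi1 := hw1 i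
  by_cases h0 : h i = 0
  · rw [h0, if_pos rfl]
    have hne : (0 : Fin (L+1)) ≠ k.succ := (Fin.succ_ne_zero k).symm
    rw [if_neg hne]
    unfold CrowdHom.condLaw
    rw [dif_pos rfl]
    simp
  · rw [if_neg h0]
    by_cases hk : h i = k.succ
    · rw [hk, if_pos rfl, condLaw_succ_self, mul_one, exp_vv hL hw0 hw1 i]
      have h1 : (1 - w i) ≠ 0 := by linarith
      have h2 : ((L:ℝ) - 1) ≠ 0 := by linarith
      field_simp
    · rw [if_neg hk, mul_zero, Real.exp_zero, mul_one]
      unfold CrowdHom.condLaw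
      rw [dif_neg h0]
      have hpred : (h i).pred h0 ≠ k := by
        intro hp
        apply hk
        rw [← hp, Fin.succ_pred]
      rw [if_neg hpred]

end Model
end CrowdAux

/-- Under the homogeneous Dawid–Skene model with constant assignment
probability `q`, uniform class prior `π_k = 1/L`, and worker accuracies `w_i ∈ (0,1)` with
`w_i ≠ 1/L` for at least one `i`: (a) the oracle MAP rule coincides with weighted majority
voting with weights `v_i = ln((L−1)w_i/(1−w_i))`; and (b) with
`t = (q/((L−1)‖v‖₂))·Σ_i v_i(L w_i − 1)`, `c = ‖v‖_∞/‖v‖₂`, `σ² = q`, one always has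
`t ≥ 0` and hence `E[E_N] ≤ (L−1)·min{exp(−t²/2), exp(−t²/(2(σ² + c t/3)))}`. -/
theorem oracle_map_hds_is_wmv_and_bound
    {Ω : Type*} [MeasurableSpace Ω] (μ : Measure Ω) [IsProbabilityMeasure μ]
    {M N L : ℕ} (hM : 0 < M) (hN : 0 < N) (hL : 2 ≤ L)
    (y : Fin N → Ω → Fin L) (Z : Fin M → Fin N → Ω → Fin (L + 1))
    (hym : ∀ j, Measurable (y j)) (hZm : ∀ i j, Measurable (Z i j))
    (q : ℝ) (w : Fin M → ℝ)
    (hq0 : 0 < q) (hq1 : q ≤ 1)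
    (hw0 : ∀ i, 0 < w i) (hw1 : ∀ i, w i < 1)
    (hwne : ∃ i, w i ≠ 1 / (L : ℝ))
    (hprior : ∀ (j : Fin N) (k : Fin L), (μ {ω | y j ω = k}).toReal = 1 / (L : ℝ))
    (hlaw : ∀ (j : Fin N) (k : Fin L) (h : Fin M → Fin (L + 1)),
      (μ {ω | y j ω = k ∧ ∀ i, Z i j ω = h i}).toReal
        = (1 / (L : ℝ)) * ∏ i, CrowdHom.condLaw q w i k (h i))
    (hindep : iIndepFun (fun j ω => (y j ω, fun i => Z i j ω)) μ)
    (yhat : Fin N → Ω → Fin L) (hyhatm : ∀ j, Measurable (yhat j))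
    (hyhat : ∀ (j : Fin N) (ω : Ω) (k : Fin L),
      (∑ i, Real.log (((L : ℝ) - 1) * w i / (1 - w i))
          * (if Z i j ω = k.succ then (1 : ℝ) else 0))
        ≤ ∑ i, Real.log (((L : ℝ) - 1) * w i / (1 - w i))
            * (if Z i j ω = (yhat j ω).succ then (1 : ℝ) else 0)) :
    (∀ (j : Fin N) (h : Fin M → Fin (L + 1)),
      0 < μ {ω | ∀ i, Z i j ω = h i} →
      ∀ k : Fin L,
        ((∀ l : Fin L,
            (μ {ω | y j ω = l ∧ ∀ i, Z i j ω = h i}).toReal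
                / (μ {ω | ∀ i, Z i j ω = h i}).toReal
              ≤ (μ {ω | y j ω = k ∧ ∀ i, Z i j ω = h i}).toReal
                / (μ {ω | ∀ i, Z i j ω = h i}).toReal)
          ↔ (∀ l : Fin L,
            (∑ i, Real.log (((L : ℝ) - 1) * w i / (1 - w i))
                * (if h i = l.succ then (1 : ℝ) else 0))
              ≤ ∑ i, Real.log (((L : ℝ) - 1) * w i / (1 - w i))
                  * (if h i = k.succ then (1 : ℝ) else 0))))
    ∧ 0 ≤ CrowdHom.tWMV L q w (fun i => Real.log (((L : ℝ) - 1) * w i / (1 - w i)))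
    ∧ (N : ℝ)⁻¹ * ∑ j, (μ {ω | yhat j ω ≠ y j ω}).toReal
        ≤ ((L : ℝ) - 1) * min
            (Real.exp
              (-(CrowdHom.tWMV L q w
                  (fun i => Real.log (((L : ℝ) - 1) * w i / (1 - w i)))) ^ 2 / 2))
            (Real.exp
              (-(CrowdHom.tWMV L q w
                  (fun i => Real.log (((L : ℝ) - 1) * w i / (1 - w i)))) ^ 2 /
                (2 * (q + CrowdHom.cConst
                    (fun i => Real.log (((L : ℝ) - 1) * w i / (1 - w i)))
                  * CrowdHom.tWMV L q w
                    (fun i => Real.log (((L : ℝ) - 1) * w i / (1 - w i))) / 3)))) := by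
  classical
  have hLf : (1:ℝ) ≤ (L:ℝ) - 1 := (CrowdAux.L_facts hL).2
  have hLpos : (0:ℝ) < (L:ℝ) := by linarith
  have hv : (fun i => Real.log (((L : ℝ) - 1) * w i / (1 - w i))) = CrowdAux.vv L w := rfl
  rw [hv]
  set v := CrowdAux.vv L w with hvdef
  refine ⟨?_, ?_, ?_⟩
  · -- part (a)
    intro j h hpos k
    have hmeas : ∀ l : Fin L, MeasurableSet {ω | y j ω = l ∧ ∀ i, Z i j ω = h i} := by
      intro l
      have hset : {ω | y j ω = l ∧ ∀ i, Z i j ω = h i}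
          = (y j ⁻¹' {l}) ∩ ⋂ i, (Z i j ⁻¹' {h i}) := by
        ext ω; simp [Set.mem_iInter]
      rw [hset]
      exact ((hym j) (measurableSet_singleton l)).inter
        (MeasurableSet.iInter fun i => (hZm i j) (measurableSet_singleton (h i)))
    have hunion : {ω | ∀ i, Z i j ω = h i}
        = ⋃ l : Fin L, {ω | y j ω = l ∧ ∀ i, Z i j ω = h i} := by
      ext ω
      simp only [Set.mem_iUnion, Set.mem_setOf_eq]
      exact ⟨fun hp => ⟨y j ω, rfl, hp⟩, fun ⟨l, _, hp⟩ => hp⟩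
    have hdisj : Pairwise (Function.onFun Disjoint
        fun l : Fin L => {ω | y j ω = l ∧ ∀ i, Z i j ω = h i}) := by
      intro a b hab
      rw [Function.onFun, Set.disjoint_left]
      rintro ω ⟨ha, -⟩ ⟨hb, -⟩
      exact hab (ha.symm.trans hb)
    have hDsum : (μ {ω | ∀ i, Z i j ω = h i}).toReal
        = ∑ l : Fin L, (μ {ω | y j ω = l ∧ ∀ i, Z i j ω = h i}).toReal := by
      rw [hunion, measure_iUnion hdisj hmeas, tsum_fintype]
      exact ENNReal.toReal_sum fun l _ => measure_ne_top μ _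
    have hDpos : 0 < (μ {ω | ∀ i, Z i j ω = h i}).toReal :=
      ENNReal.toReal_pos hpos.ne' (measure_ne_top μ _)
    set Ch := ∏ i, (if h i = 0 then 1 - q else q * ((1 - w i) / ((L : ℝ) - 1))) with hChdef
    have hNum : ∀ l : Fin L, (μ {ω | y j ω = l ∧ ∀ i, Z i j ω = h i}).toReal
        = (1 / (L:ℝ)) * (Ch * Real.exp (CrowdAux.SSv v l h)) := by
      intro l
      rw [hlaw j l h, CrowdAux.prod_condLaw_eq hL hw0 hw1 l h]
    have hC0 : 0 ≤ Ch := by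
      rw [hChdef]
      apply Finset.prod_nonneg
      intro i _
      have := hw0 i; have := hw1 i
      split
      · linarith
      · exact mul_nonneg hq0.le (div_nonneg (by linarith) (by linarith))
    have hCpos : 0 < Ch := by
      rcases hC0.lt_or_eq with hc | hc
      · exact hc
      · exfalso
        rw [hDsum] at hDpos
        have hz : ∀ l ∈ (Finset.univ : Finset (Fin L)),
            (μ {ω | y j ω = l ∧ ∀ i, Z i j ω = h i}).toReal = 0 := by
          intro l _
          rw [hNum l, ← hc]
          ring
        rw [Finset.sum_congr rfl hz] at hDpos
        simp at hDpos
    have hLinv : (0:ℝ) < 1 / (L:ℝ) := by positivity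
    constructor
    · intro hmax l
      have h1 := (div_le_div_iff_of_pos_right hDpos).mp (hmax l)
      rw [hNum l, hNum k, ← mul_assoc, ← mul_assoc] at h1
      have h2 := le_of_mul_le_mul_left h1 (mul_pos hLinv hCpos)
      exact Real.exp_le_exp.mp h2
    · intro hSS l
      apply (div_le_div_iff_of_pos_right hDpos).mpr
      rw [hNum l, hNum k]
      have h2 : Real.exp (CrowdAux.SSv v l h) ≤ Real.exp (CrowdAux.SSv v k h) :=
        Real.exp_le_exp.mpr (hSS l)
      have h3 := mul_le_mul_of_nonneg_left h2 (mul_pos hLinv hCpos).le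
      calc (1 / (L:ℝ)) * (Ch * Real.exp (CrowdAux.SSv v l h))
          = (1 / (L:ℝ) * Ch) * Real.exp (CrowdAux.SSv v l h) := by ring
        _ ≤ (1 / (L:ℝ) * Ch) * Real.exp (CrowdAux.SSv v k h) := h3
        _ = (1 / (L:ℝ)) * (Ch * Real.exp (CrowdAux.SSv v k h)) := by ring
  · -- part (b)
    rw [CrowdHom.tWMV]
    apply mul_nonneg (div_nonneg hq0.le (mul_nonneg (by linarith) (Real.sqrt_nonneg _)))
    exact Finset.sum_nonneg fun i _ => CrowdAux.vv_mul_nonneg hL hw0 hw1 i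
  · -- part (c)
    set t := CrowdHom.tWMV L q w v with htdef
    set cc := CrowdHom.cConst v with hccdef
    set Rmin := min (Real.exp (-t ^ 2 / 2)) (Real.exp (-t ^ 2 / (2 * (q + cc * t / 3))))
      with hRmindef
    have hper : ∀ j : Fin N, (μ {ω | yhat j ω ≠ y j ω}).toReal ≤ ((L:ℝ) - 1) * Rmin := by
      intro j
      set T : Finset (Fin L × (Fin M → Fin (L+1))) :=
        Finset.univ.filter
          (fun p => ∃ l, l ≠ p.1 ∧ CrowdAux.SSv v p.1 p.2 ≤ CrowdAux.SSv v l p.2) with hTdef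
      have hsub : {ω | yhat j ω ≠ y j ω}
          ⊆ ⋃ p ∈ T, {ω | y j ω = p.1 ∧ ∀ i, Z i j ω = p.2 i} := by
        intro ω hω
        have hmemT : ((y j ω, fun i => Z i j ω) :
            Fin L × (Fin M → Fin (L+1))) ∈ T := by
          rw [hTdef, Finset.mem_filter]
          exact ⟨Finset.mem_univ _, ⟨yhat j ω, hω, hyhat j ω (y j ω)⟩⟩
        exact Set.mem_biUnion hmemT ⟨rfl, fun i => rfl⟩
      have hmu : μ {ω | yhat j ω ≠ y j ω}
          ≤ ∑ p ∈ T, μ {ω | y j ω = p.1 ∧ ∀ i, Z i j ω = p.2 i} :=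
        le_trans (measure_mono hsub) (measure_biUnion_finset_le T _)
      have hsum_ne : (∑ p ∈ T, μ {ω | y j ω = p.1 ∧ ∀ i, Z i j ω = p.2 i}) ≠ ⊤ := by
        refine (ENNReal.sum_lt_top.mpr fun p _ => measure_lt_top μ _).ne
      have hreal : (μ {ω | yhat j ω ≠ y j ω}).toReal
          ≤ ∑ p ∈ T, (1 / (L:ℝ)) * ∏ i, CrowdHom.condLaw q w i p.1 (p.2 i) := by
        calc (μ {ω | yhat j ω ≠ y j ω}).toReal
            ≤ (∑ p ∈ T, μ {ω | y j ω = p.1 ∧ ∀ i, Z i j ω = p.2 i}).toReal :=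
              ENNReal.toReal_mono hsum_ne hmu
          _ = ∑ p ∈ T, (μ {ω | y j ω = p.1 ∧ ∀ i, Z i j ω = p.2 i}).toReal :=
              ENNReal.toReal_sum fun p _ => measure_ne_top μ _
          _ = _ := Finset.sum_congr rfl fun p _ => hlaw j p.1 p.2
      have hf0 : ∀ (k : Fin L) (hh : Fin M → Fin (L+1)),
          0 ≤ (1 / (L:ℝ)) * ∏ i, CrowdHom.condLaw q w i k (hh i) := fun k hh =>
        mul_nonneg (by positivity)
          (Finset.prod_nonneg fun i _ => CrowdAux.condLaw_nonneg hL hq0 hq1 hw0 hw1 i k (hh i))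
      have hcomb : ∑ p ∈ T, (1 / (L:ℝ)) * ∏ i, CrowdHom.condLaw q w i p.1 (p.2 i)
          ≤ ∑ k : Fin L, ∑ l ∈ Finset.univ.erase k,
              ∑ hh ∈ Finset.univ.filter
                (fun hh : Fin M → Fin (L+1) => CrowdAux.SSv v k hh ≤ CrowdAux.SSv v l hh),
                (1 / (L:ℝ)) * ∏ i, CrowdHom.condLaw q w i k (hh i) := by
        have step1 : ∀ p ∈ T, (1 / (L:ℝ)) * ∏ i, CrowdHom.condLaw q w i p.1 (p.2 i)
            ≤ ∑ l ∈ Finset.univ.erase p.1,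
                (if CrowdAux.SSv v p.1 p.2 ≤ CrowdAux.SSv v l p.2
                  then (1 / (L:ℝ)) * ∏ i, CrowdHom.condLaw q w i p.1 (p.2 i) else 0) := by
          intro p hp
          rw [hTdef, Finset.mem_filter] at hp
          obtain ⟨-, l, hl, hSSl⟩ := hp
          have hlm : l ∈ Finset.univ.erase p.1 := Finset.mem_erase.mpr ⟨hl, Finset.mem_univ _⟩
          have hs := Finset.single_le_sum
            (f := fun l => if CrowdAux.SSv v p.1 p.2 ≤ CrowdAux.SSv v l p.2
              then (1 / (L:ℝ)) * ∏ i, CrowdHom.condLaw q w i p.1 (p.2 i) else 0)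
            (fun l _ => by split_ifs; exacts [hf0 p.1 p.2, le_refl 0]) hlm
          rw [if_pos hSSl] at hs
          exact hs
        calc ∑ p ∈ T, (1 / (L:ℝ)) * ∏ i, CrowdHom.condLaw q w i p.1 (p.2 i)
            ≤ ∑ p ∈ T, ∑ l ∈ Finset.univ.erase p.1,
                (if CrowdAux.SSv v p.1 p.2 ≤ CrowdAux.SSv v l p.2
                  then (1 / (L:ℝ)) * ∏ i, CrowdHom.condLaw q w i p.1 (p.2 i) else 0) :=
              Finset.sum_le_sum step1
          _ ≤ ∑ p : Fin L × (Fin M → Fin (L+1)), ∑ l ∈ Finset.univ.erase p.1,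
                (if CrowdAux.SSv v p.1 p.2 ≤ CrowdAux.SSv v l p.2
                  then (1 / (L:ℝ)) * ∏ i, CrowdHom.condLaw q w i p.1 (p.2 i) else 0) := by
              apply Finset.sum_le_sum_of_subset_of_nonneg (Finset.subset_univ T)
              intro p _ _
              apply Finset.sum_nonneg
              intro l _
              split_ifs
              exacts [hf0 p.1 p.2, le_refl 0]
          _ = ∑ k : Fin L, ∑ hh : Fin M → Fin (L+1), ∑ l ∈ Finset.univ.erase k,
                (if CrowdAux.SSv v k hh ≤ CrowdAux.SSv v l hh
                  then (1 / (L:ℝ)) * ∏ i, CrowdHom.condLaw q w i k (hh i) else 0) :=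
              Fintype.sum_prod_type _
          _ = ∑ k : Fin L, ∑ l ∈ Finset.univ.erase k, ∑ hh : Fin M → Fin (L+1),
                (if CrowdAux.SSv v k hh ≤ CrowdAux.SSv v l hh
                  then (1 / (L:ℝ)) * ∏ i, CrowdHom.condLaw q w i k (hh i) else 0) :=
              Finset.sum_congr rfl fun k _ => Finset.sum_comm
          _ = ∑ k : Fin L, ∑ l ∈ Finset.univ.erase k,
              ∑ hh ∈ Finset.univ.filter
                (fun hh : Fin M → Fin (L+1) => CrowdAux.SSv v k hh ≤ CrowdAux.SSv v l hh),
                (1 / (L:ℝ)) * ∏ i, CrowdHom.condLaw q w i k (hh i) := by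
              apply Finset.sum_congr rfl
              intro k _
              apply Finset.sum_congr rfl
              intro l _
              exact (Finset.sum_filter _ _).symm
      have hpair : ∀ k : Fin L, ∀ l ∈ Finset.univ.erase k,
          ∑ hh ∈ Finset.univ.filter
            (fun hh : Fin M → Fin (L+1) => CrowdAux.SSv v k hh ≤ CrowdAux.SSv v l hh),
            (1 / (L:ℝ)) * ∏ i, CrowdHom.condLaw q w i k (hh i)
          ≤ (1 / (L:ℝ)) * Rmin := by
        intro k l hl
        rw [← Finset.mul_sum]
        apply mul_le_mul_of_nonneg_left _ (by positivity)
        exact CrowdAux.chernoff_pair hM hL hq0 hq1 hw0 hw1 hwne (Finset.mem_erase.mp hl).1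
      have hcard : ∀ k : Fin L, (Finset.univ.erase k).card = L - 1 := by
        intro k
        rw [Finset.card_erase_of_mem (Finset.mem_univ k), Finset.card_univ, Fintype.card_fin]
      calc (μ {ω | yhat j ω ≠ y j ω}).toReal
          ≤ ∑ p ∈ T, (1 / (L:ℝ)) * ∏ i, CrowdHom.condLaw q w i p.1 (p.2 i) := hreal
        _ ≤ ∑ k : Fin L, ∑ l ∈ Finset.univ.erase k,
              ∑ hh ∈ Finset.univ.filter
                (fun hh : Fin M → Fin (L+1) => CrowdAux.SSv v k hh ≤ CrowdAux.SSv v l hh),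
                (1 / (L:ℝ)) * ∏ i, CrowdHom.condLaw q w i k (hh i) := hcomb
        _ ≤ ∑ k : Fin L, ∑ l ∈ Finset.univ.erase k, (1 / (L:ℝ)) * Rmin :=
            Finset.sum_le_sum fun k _ => Finset.sum_le_sum (hpair k)
        _ = ((L:ℝ) - 1) * Rmin := by
            rw [Finset.sum_congr rfl (fun k _ => Finset.sum_const ((1 / (L:ℝ)) * Rmin))]
            simp only [hcard, Finset.sum_const, Finset.card_univ, Fintype.card_fin,
              nsmul_eq_mul]
            have hLcast : ((L - 1 : ℕ) : ℝ) = (L:ℝ) - 1 := by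
              have : 1 ≤ L := by omega
              push_cast [this]
              rfl
            rw [hLcast]
            field_simp
    have hsumall : ∑ j, (μ {ω | yhat j ω ≠ y j ω}).toReal
        ≤ (N:ℝ) * (((L:ℝ) - 1) * Rmin) := by
      calc ∑ j, (μ {ω | yhat j ω ≠ y j ω}).toReal
          ≤ ∑ _j : Fin N, ((L:ℝ) - 1) * Rmin := Finset.sum_le_sum fun j _ => hper j
        _ = (N:ℝ) * (((L:ℝ) - 1) * Rmin) := by
            rw [Finset.sum_const, Finset.card_univ, Fintype.card_fin, nsmul_eq_mul]
    have hNpos : (0:ℝ) < (N:ℝ) := by exact_mod_cast hN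
    calc (N:ℝ)⁻¹ * ∑ j, (μ {ω | yhat j ω ≠ y j ω}).toReal
        ≤ (N:ℝ)⁻¹ * ((N:ℝ) * (((L:ℝ) - 1) * Rmin)) :=
          mul_le_mul_of_nonneg_left hsumall (by positivity)
      _ = ((L:ℝ) - 1) * Rmin := by field_simp
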